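/- A commutative ring R is locally stable if and only if for all a, b ∈ R with aR + bR = R there exists y ∈ R such that R/(a+by)R has stable range 1. -/

import Mathlib

open Matrix

/-- A commutative ring `T` has stable range 1: whenever `cT + dT = T`,
there exists `y` with `c + d*y` a unit. -/
def StableRange1 (T : Type) [CommRing T] : Prop :=
  ∀ c d : T, IsCoprime c d → ∃ y : T, IsUnit (c + d * y)

/-- The multiplicative set `S_a = { b | aR + bR = R }`. -/
def Sa (R : Type) [CommRing R] (a : R) : Submonoid R where
  carrier := {x | IsCoprime a x}
  one_mem' := isCoprime_one_right
  mul_mem' := fun hb hc => IsCoprime.mul_right hb hc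

/-- `R` is locally stable: whenever `aR + bR = R` there is `y` such that
`R/(a+by)R` has stable range 1. -/
def LocallyStable (R : Type) [CommRing R] : Prop :=
  ∀ a b : R, IsCoprime a b → ∃ y : R,
    StableRange1 (R ⧸ Ideal.span ({a + b * y} : Set R))

/-- `c` is an adequate element. -/
def Adequate {R : Type} [CommRing R] (c : R) : Prop :=
  ∀ a : R, ∃ r s : R, c = r * s ∧ IsCoprime r a ∧
    ∀ s' : R, s' ∣ s → ¬ IsUnit s' → ¬ IsCoprime s' a

/-- A ring is clean if every element is the sum of an idempotent and a unit. -/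
def IsCleanRing (T : Type) [CommRing T] : Prop :=
  ∀ x : T, ∃ e u : T, IsIdempotentElem e ∧ IsUnit u ∧ x = e + u

/-- A ring is VNL if for every `x`, `x` or `1 - x` is von Neumann regular. -/
def IsVNLRing (T : Type) [CommRing T] : Prop :=
  ∀ x : T, (∃ y : T, x = x * y * x) ∨ (∃ y : T, (1 - x) = (1 - x) * y * (1 - x))

/-- `R` has almost stable range 1: every proper homomorphic image has stable range 1. -/
def AlmostStableRange1 (R : Type) [CommRing R] : Prop :=
  ∀ I : Ideal R, I ≠ ⊥ → StableRange1 (R ⧸ I)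

/-- `R` has adequate range 1. -/
def AdequateRange1 (R : Type) [CommRing R] : Prop :=
  ∀ a b : R, IsCoprime a b → ∃ y : R, Adequate (a + b * y)

/-- A (rectangular) matrix admits diagonal reduction. -/
def DiagonalReduction {R : Type} [CommRing R] {m n : ℕ}
    (A : Matrix (Fin m) (Fin n) R) : Prop :=
  ∃ (P : Matrix (Fin m) (Fin m) R) (Q : Matrix (Fin n) (Fin n) R),
    IsUnit P ∧ IsUnit Q ∧
    (∀ (i : Fin m) (j : Fin n), (i : ℕ) ≠ (j : ℕ) → (P * A * Q) i j = 0) ∧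
    (∀ (i i' : Fin m) (j j' : Fin n), (i : ℕ) = (j : ℕ) → (i' : ℕ) = (j' : ℕ) →
      (i : ℕ) + 1 = (i' : ℕ) → (P * A * Q) i j ∣ (P * A * Q) i' j')

/-- `R` is an elementary divisor ring. -/
def ElementaryDivisorRing (R : Type) [CommRing R] : Prop :=
  ∀ (m n : ℕ) (A : Matrix (Fin m) (Fin n) R), DiagonalReduction A

/-- `GE n R` : the subgroup of `GL n R` generated by elementary matrices. -/
def GE (n : ℕ) (R : Type) [CommRing R] : Subgroup (GL (Fin n) R) :=
  Subgroup.closure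
    { M | ∃ t : Matrix.TransvectionStruct (Fin n) R,
        (M : Matrix (Fin n) (Fin n) R) = t.toMatrix }

lemma sr1_of_surjective {A B : Type} [CommRing A] [CommRing B]
    (f : A →+* B) (hf : Function.Surjective f) (h : StableRange1 A) :
    StableRange1 B := by
  intro c d hcd
  obtain ⟨u, v, huv⟩ := hcd
  obtain ⟨c', hc⟩ := hf c
  obtain ⟨d', hd⟩ := hf d
  obtain ⟨u', hu⟩ := hf u
  obtain ⟨v', hv⟩ := hf v
  have hcop : IsCoprime c' (v' * d' + (1 - (u' * c' + v' * d'))) :=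
    ⟨u', 1, by ring⟩
  obtain ⟨y, hy⟩ := h _ _ hcop
  refine ⟨v * f y, ?_⟩
  have hE : f (c' + (v' * d' + (1 - (u' * c' + v' * d'))) * y)
      = c + d * (v * f y) := by
    simp only [_root_.map_add, _root_.map_mul, _root_.map_sub, _root_.map_one, hc, hd, hu, hv]
    linear_combination (- f y) * huv
  rw [← hE]
  exact hy.map f

lemma mk_unit_of_Sa {R : Type} [CommRing R] {w s : R} (hs : IsCoprime w s) :
    IsUnit (Ideal.Quotient.mk (Ideal.span ({w} : Set R)) s) := by
  obtain ⟨x, y, hxy⟩ := hs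
  refine IsUnit.of_mul_eq_one (Ideal.Quotient.mk _ y) ?_
  rw [← _root_.map_mul, ← _root_.map_one (Ideal.Quotient.mk (Ideal.span ({w} : Set R))),
    Ideal.Quotient.eq, Ideal.mem_span_singleton]
  exact ⟨-x, by linear_combination hxy⟩

lemma Sa_of_mk_unit {R : Type} [CommRing R] {w s : R}
    (hs : IsUnit (Ideal.Quotient.mk (Ideal.span ({w} : Set R)) s)) : IsCoprime w s := by
  obtain ⟨z', hz'⟩ := isUnit_iff_exists_inv.mp hs
  obtain ⟨z, rfl⟩ := Ideal.Quotient.mk_surjective z'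
  rw [← _root_.map_mul, ← _root_.map_one (Ideal.Quotient.mk (Ideal.span ({w} : Set R))),
    Ideal.Quotient.eq, Ideal.mem_span_singleton] at hz'
  obtain ⟨f, hf⟩ := hz'
  exact ⟨-f, z, by linear_combination hf⟩

lemma key_iff (R : Type) [CommRing R] (w : R) :
    StableRange1 (Localization (Sa R w)) ↔
    StableRange1 (R ⧸ Ideal.span ({w} : Set R)) := by
  constructor
  · intro h
    have hunits : ∀ s : Sa R w,
        IsUnit (Ideal.Quotient.mk (Ideal.span ({w} : Set R)) (s : R)) :=
      fun s => mk_unit_of_Sa s.2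
    refine sr1_of_surjective (IsLocalization.lift (S := Localization (Sa R w)) hunits)
      ?_ h
    intro x
    obtain ⟨r, rfl⟩ := Ideal.Quotient.mk_surjective x
    exact ⟨algebraMap R _ r, IsLocalization.lift_eq hunits r⟩
  · intro h c d hcd
    obtain ⟨A, B, hAB⟩ := hcd
    have step : ∀ z : Localization (Sa R w), ∃ (r : R) (s : Sa R w),
        z * algebraMap R (Localization (Sa R w)) s
          = algebraMap R (Localization (Sa R w)) r := by
      intro z
      obtain ⟨⟨r, s⟩, hrs⟩ := IsLocalization.mk'_surjective (Sa R w) z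
      exact ⟨r, s, by rw [← hrs]; exact IsLocalization.mk'_spec _ r s⟩
    obtain ⟨cr, cs, hc⟩ := step c
    obtain ⟨dr, ds, hd⟩ := step d
    obtain ⟨ar, as, ha⟩ := step A
    obtain ⟨br, bs, hb⟩ := step B
    set alg := algebraMap R (Localization (Sa R w)) with halg
    -- clear denominators in hAB
    have key : alg (ar * cr * (bs * ds) + br * dr * (as * cs))
        = alg ((as : R) * cs * bs * ds) := by
      simp only [_root_.map_add, _root_.map_mul]
      calc alg ar * alg cr * (alg bs * alg ds) + alg br * alg dr * (alg as * alg cs)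
          = (A * alg as) * (c * alg cs) * (alg bs * alg ds)
            + (B * alg bs) * (d * alg ds) * (alg as * alg cs) := by rw [ha, hb, hc, hd]
        _ = (A * c + B * d) * (alg as * alg cs * alg bs * alg ds) := by ring
        _ = alg as * alg cs * alg bs * alg ds := by rw [hAB, one_mul]
        _ = _ := by ring
    obtain ⟨t, ht⟩ := IsLocalization.exists_of_eq (M := Sa R w)
      (S := Localization (Sa R w)) key
    -- s' ∈ Sa
    have hs' : IsCoprime w ((t : R) * ((as : R) * cs * bs * ds)) :=
      (t.2.mul_right (((as.2.mul_right cs.2).mul_right bs.2).mul_right ds.2))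
    -- Bezout in R landing in Sa
    have hbez : ((t : R) * (ar * (bs * ds))) * cr + ((t : R) * (br * (as * cs))) * dr
        = (t : R) * ((as : R) * cs * bs * ds) := by linear_combination ht
    -- coprimality in the quotient
    set mk := Ideal.Quotient.mk (Ideal.span ({w} : Set R)) with hmk
    obtain ⟨z', hz'⟩ := isUnit_iff_exists_inv.mp (mk_unit_of_Sa hs')
    have hcop : IsCoprime (mk cr) (mk dr) := by
      refine ⟨z' * mk ((t : R) * (ar * (bs * ds))), z' * mk ((t : R) * (br * (as * cs))), ?_⟩
      rw [mul_assoc, mul_assoc, ← mul_add, ← _root_.map_mul, ← _root_.map_mul, ← _root_.map_add, hbez, mul_comm]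
      exact hz'
    obtain ⟨y', hy'⟩ := h _ _ hcop
    obtain ⟨y, rfl⟩ := Ideal.Quotient.mk_surjective y'
    have hmem : IsCoprime w (cr + dr * y) := by
      apply Sa_of_mk_unit (s := cr + dr * y)
      rw [← hmk]
      simpa only [_root_.map_add, _root_.map_mul] using hy'
    -- now conclude in the localization
    have hu1 : IsUnit (alg (cr + dr * y)) :=
      IsLocalization.map_units (Localization (Sa R w)) (⟨cr + dr * y, hmem⟩ : Sa R w)
    have hucs : IsUnit (alg cs) := IsLocalization.map_units _ cs
    have huds : IsUnit (alg ds) := IsLocalization.map_units _ ds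
    have hUs : (hucs.unit : Localization (Sa R w)) = alg cs := hucs.unit_spec
    have hVs : (huds.unit : Localization (Sa R w)) = alg ds := huds.unit_spec
    have hUinv : alg (cs : R) * ((hucs.unit⁻¹ : (Localization (Sa R w))ˣ) : Localization (Sa R w)) = 1 := by
      exact hucs.mul_val_inv
    refine ⟨huds.unit * hucs.unit⁻¹ * alg y, ?_⟩
    have hcalc : (c + d * (↑huds.unit * ↑hucs.unit⁻¹ * alg y)) * alg (cs : R)
        = alg (cr + dr * y) := by
      simp only [_root_.map_add, _root_.map_mul]
      linear_combination hc + (d * (↑hucs.unit⁻¹ : Localization (Sa R w)) * alg y * alg (cs : R)) * hVs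
        + ((↑hucs.unit⁻¹ : Localization (Sa R w)) * alg y * alg (cs : R)) * hd
        + (alg dr * alg y) * hUinv
    have hfin : IsUnit ((c + d * (↑huds.unit * ↑hucs.unit⁻¹ * alg y)) * alg (cs : R)) := by
      rw [hcalc]; exact hu1
    exact isUnit_of_mul_isUnit_left hfin

/-- `R` is locally stable (localizations `R_{a+by}` of stable range 1) iff for all
coprime `a, b` there is `y` with `R/(a+by)R` of stable range 1. -/
theorem stmt_3 (R : Type) [CommRing R] :
    (∀ a b : R, IsCoprime a b → ∃ y : R,
        StableRange1 (Localization (Sa R (a + b * y)))) ↔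
    (∀ a b : R, IsCoprime a b → ∃ y : R,
        StableRange1 (R ⧸ Ideal.span ({a + b * y} : Set R))) := by
  constructor
  · intro H a b hab
    obtain ⟨y, hy⟩ := H a b hab
    exact ⟨y, (key_iff R (a + b * y)).mp hy⟩
  · intro H a b hab
    obtain ⟨y, hy⟩ := H a b hab
    exact ⟨y, (key_iff R (a + b * y)).mpr hy⟩
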